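/- Let (R, 𝔪) be a commutative local ring with unity which is zero dimensional (every prime ideal of R is maximal) and has finite residue field R/𝔪. If R admits a nontrivial polynomial characteristic function (there exist a nonempty proper subset S ⊆ R and f ∈ R[X] with f(r) = 1 for r ∈ S and f(r) = 0 for r ∉ S), then R has finite index of nilpotency: there exists a positive integer r such that aʳ = 0 for every nilpotent element a ∈ R. -/

import Mathlib

open Polynomial IsLocalRing Finset


/-- **Proposition 2.6 (finite index of nilpotency).** Let `(R, 𝔪)` be a zero dimensional
commutative local ring with finite residue field. If `R` admits a nontrivial polynomial
characteristic function, then `R` has finite index of nilpotency. -/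
theorem stmt_12 {R : Type*} [CommRing R] [IsLocalRing R]
    (hdim : ∀ P : Ideal R, P.IsPrime → P.IsMaximal)
    (hres : Finite (IsLocalRing.ResidueField R))
    (h : ∃ (S : Set R) (f : Polynomial R), S.Nonempty ∧ S ≠ Set.univ ∧
      (∀ r ∈ S, f.eval r = 1) ∧ (∀ r ∉ S, f.eval r = 0)) :
    ∃ r : ℕ, 0 < r ∧ ∀ a : R, IsNilpotent a → a ^ r = 0 := by
  classical
  obtain ⟨S, f, ⟨s, hs⟩, hSne, hS1, hS0⟩ := h
  set K := IsLocalRing.maximalIdeal R with hK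
  -- every element of the maximal ideal is nilpotent
  have hKnil : ∀ a : R, a ∈ K → IsNilpotent a := by
    intro a ha
    rw [← mem_nilradical, nilradical_eq_sInf]
    refine Ideal.mem_sInf.mpr ?_
    rintro P hP
    rw [IsLocalRing.eq_maximalIdeal (hdim P hP)]
    exact ha
  -- values of f are 0 or 1
  have heval : ∀ x : R, f.eval x = 0 ∨ f.eval x = 1 := by
    intro x
    by_cases hx : x ∈ S
    · exact Or.inr (hS1 x hx)
    · exact Or.inl (hS0 x hx)
  have hone : ¬ IsNilpotent (1 : R) := by
    rintro ⟨n, hn⟩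
    simp at hn
  -- f is invariant under adding nilpotents
  have hshift : ∀ (x a : R), IsNilpotent a → f.eval (x + a) = f.eval x := by
    intro x a ha
    obtain ⟨c, hc⟩ : a ∣ f.eval (x + a) - f.eval x := by
      simpa using Polynomial.sub_dvd_eval_sub (x + a) x f
    have hnil : IsNilpotent (f.eval (x + a) - f.eval x) := by
      rw [hc]; exact (Commute.all a c).isNilpotent_mul_right ha
    rcases heval (x + a) with h1 | h1 <;> rcases heval x with h2 | h2 <;>
        rw [h1, h2] at hnil ⊢
    · exact absurd (by simpa using hnil.neg) hone
    · exact absurd (by simpa using hnil) hone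
  -- Taylor expansion
  have htaylor : ∀ t c : R, f.eval (t + c) =
      ∑ i ∈ Finset.range (f.natDegree + 1), (hasseDeriv i f).eval t * c ^ i := by
    intro t c
    have h1 : f.eval (t + c) = (taylor t f).eval c := by
      rw [taylor_eval, add_comm]
    rw [h1, Polynomial.eval_eq_sum_range' (n := f.natDegree + 1)
      (by rw [natDegree_taylor]; exact Nat.lt_succ_self _) c]
    exact Finset.sum_congr rfl fun i _ => by rw [taylor_coeff]
  have hKne : (1 : R) ∉ K := by
    intro h1
    exact (IsLocalRing.maximalIdeal.isMaximal R).ne_top ((Ideal.eq_top_iff_one _).mpr h1)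
  -- split off the first term of the Taylor sum
  have hsplit0 : ∀ t c : R, ∑ i ∈ Finset.range (f.natDegree + 1),
      (hasseDeriv i f).eval t * c ^ i
      = f.eval t + ∑ i ∈ Finset.Ico 1 (f.natDegree + 1), (hasseDeriv i f).eval t * c ^ i := by
    intro t c
    rw [Finset.range_eq_Ico, Finset.sum_eq_sum_Ico_succ_bot (Nat.succ_pos _)]
    simp
  -- there is a Hasse derivative with a unit value
  have hex : ∃ j, 0 < j ∧ ∃ t : R, (hasseDeriv j f).eval t ∉ K := by
    by_contra hcon
    push_neg at hcon
    obtain ⟨t, ht⟩ : ∃ t, t ∉ S := by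
      by_contra h'
      push_neg at h'
      exact hSne (Set.eq_univ_iff_forall.mpr h')
    have hts : s + (t - s) = t := by ring
    have h1 := htaylor s (t - s)
    rw [hts, hsplit0 s (t - s), hS0 t ht, hS1 s hs] at h1
    have hmem : ∑ i ∈ Finset.Ico 1 (f.natDegree + 1),
        (hasseDeriv i f).eval s * (t - s) ^ i ∈ K := by
      refine Ideal.sum_mem _ fun i hi => ?_
      exact K.mul_mem_right _ (hcon i (Finset.mem_Ico.mp hi).1 s)
    have : (1 : R) ∈ K := by
      have : (-1 : R) ∈ K := by
        have heq : (-1 : R) = ∑ i ∈ Finset.Ico 1 (f.natDegree + 1),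
            (hasseDeriv i f).eval s * (t - s) ^ i := by linear_combination h1
        rw [heq]; exact hmem
      simpa using K.neg_mem this
    exact hKne this
  -- take the minimal such j
  set j := Nat.find hex with hjdef
  obtain ⟨hj0, t₀, hu⟩ : 0 < j ∧ ∃ t : R, (hasseDeriv j f).eval t ∉ K := Nat.find_spec hex
  have hmin : ∀ i, 0 < i → i < j → ∀ t : R, (hasseDeriv i f).eval t ∈ K := by
    intro i hi hij t
    by_contra hc
    exact Nat.find_min hex hij ⟨hi, t, hc⟩
  set u := (hasseDeriv j f).eval t₀ with hudef
  have huu : IsUnit u := IsLocalRing.notMem_maximalIdeal.mp hu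
  have hjD : j ≤ f.natDegree := by
    by_contra hc
    push_neg at hc
    apply hu
    rw [hudef, Polynomial.hasseDeriv_eq_zero_of_lt_natDegree f j hc]
    simp
  -- the ideal generated by the lower Hasse derivative values
  set J : Ideal R := Ideal.span ((fun i => (hasseDeriv i f).eval t₀) '' Set.Ico 1 j) with hJdef
  have hJfg : J.FG := Submodule.fg_span ((Set.finite_Ico 1 j).image _)
  have hJrad : J ≤ Ideal.radical ⊥ := by
    rw [hJdef, Ideal.span_le]
    rintro x ⟨i, hi, rfl⟩
    exact hKnil _ (hmin i hi.1 hi.2 t₀)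
  obtain ⟨E, hE⟩ : ∃ n : ℕ, J ^ n ≤ ⊥ := Ideal.exists_pow_le_of_le_radical_of_fg hJrad hJfg
  refine ⟨j * max 1 E, Nat.mul_pos hj0 (Nat.lt_of_lt_of_le Nat.zero_lt_one (le_max_left 1 E)),
    fun a ha => ?_⟩
  -- main computation: a ^ j ∈ J
  have key : a ^ j ∈ J := by
    have h0 : f.eval (t₀ + a) = f.eval t₀ := hshift t₀ a ha
    have h1 := htaylor t₀ a
    rw [h0, hsplit0 t₀ a] at h1
    have h2 : ∑ i ∈ Finset.Ico 1 (f.natDegree + 1), (hasseDeriv i f).eval t₀ * a ^ i = 0 := by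
      linear_combination -h1
    rw [← Finset.sum_Ico_consecutive _ (Nat.one_le_iff_ne_zero.mpr hj0.ne')
        (by omega : j ≤ f.natDegree + 1), Finset.sum_eq_sum_Ico_succ_bot (Nat.lt_succ_of_le hjD)] at h2
    set L := ∑ i ∈ Finset.Ico 1 j, (hasseDeriv i f).eval t₀ * a ^ i with hLdef
    have hLJ : L ∈ J := by
      refine Ideal.sum_mem _ fun i hi => ?_
      refine J.mul_mem_right _ (Ideal.subset_span ?_)
      exact ⟨i, Finset.mem_Ico.mp hi, rfl⟩
    set b := ∑ i ∈ Finset.Ico (j + 1) (f.natDegree + 1),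
        (hasseDeriv i f).eval t₀ * a ^ (i - (j + 1)) with hbdef
    have hhigh : ∑ i ∈ Finset.Ico (j + 1) (f.natDegree + 1), (hasseDeriv i f).eval t₀ * a ^ i
        = a ^ (j + 1) * b := by
      rw [hbdef, Finset.mul_sum]
      refine Finset.sum_congr rfl fun i hi => ?_
      have hji : j + 1 ≤ i := (Finset.mem_Ico.mp hi).1
      rw [← mul_assoc, mul_comm (a ^ (j + 1)), mul_assoc, ← pow_add]
      rw [Nat.add_sub_cancel' hji]
    rw [hhigh] at h2
    -- h2 : L + (u * a ^ j + a ^ (j + 1) * b) = 0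
    rw [← hudef] at h2
    have h3 : a ^ j * (u + a * b) = -L := by
      linear_combination h2
    have hunit : IsUnit (u + a * b) :=
      ((Commute.all a b).isNilpotent_mul_right ha).isUnit_add_left_of_commute huu (Commute.all _ _)
    obtain ⟨v, hv⟩ := hunit
    have : a ^ j = ↑v⁻¹ * (a ^ j * (u + a * b)) := by
      rw [← hv, ← mul_assoc, mul_comm ((v⁻¹ : Rˣ) : R), mul_assoc]
      simp
    rw [this, h3]
    exact J.mul_mem_left _ (J.neg_mem hLJ)
  have : a ^ (j * max 1 E) ∈ (⊥ : Ideal R) := by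
    rw [pow_mul]
    exact (Ideal.pow_le_pow_right (le_max_right 1 E)).trans hE (Ideal.pow_mem_pow key _)
  simpa using this
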